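/- For every positive integer k there exists a constant N such that for every prime p > N there is a prime q with (p + 2k - 1)/2 < q < p (i.e., p + 2k - 1 < 2q and q < p). -/

import Mathlib

open Real Filter Asymptotics Nat Finset

private lemma gb_aux_isLittleO (K : ℕ) :
    (fun x : ℝ => Real.log x + (Real.sqrt (2*x) + K) * Real.log (2*x)) =o[atTop]
      (fun x : ℝ => x) := by
  have hg : (fun y : ℝ => (Real.sqrt y + K) * Real.log y) =o[atTop] (fun y : ℝ => y) := by
    have h1 : (fun y : ℝ => Real.sqrt y * Real.log y) =o[atTop] (fun y : ℝ => y) := by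
      have := (isLittleO_log_rpow_atTop (by norm_num : (0:ℝ) < 1/2)).mul_isBigO
        (isBigO_refl (fun y : ℝ => y ^ (1/2 : ℝ)) atTop)
      refine (this.congr' ?_ ?_).trans_isBigO (isBigO_refl _ _)
      · filter_upwards [eventually_ge_atTop (0:ℝ)] with y hy
        rw [Real.sqrt_eq_rpow, mul_comm]
      · filter_upwards [eventually_gt_atTop (0:ℝ)] with y hy
        rw [← Real.rpow_add hy]
        norm_num
    have h2 : (fun y : ℝ => (K : ℝ) * Real.log y) =o[atTop] (fun y : ℝ => y) :=
      (Real.isLittleO_log_id_atTop.const_mul_left _)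
    have := h1.add h2
    refine this.congr_left fun y => by ring
  have hcomp : (fun x : ℝ => (Real.sqrt (2*x) + K) * Real.log (2*x)) =o[atTop]
      (fun x : ℝ => 2*x) :=
    hg.comp_tendsto (tendsto_id.const_mul_atTop two_pos)
  have h2x : (fun x : ℝ => 2*x) =O[atTop] (fun x : ℝ => x) :=
    (isBigO_refl (fun x : ℝ => x) atTop).const_mul_left 2
  exact Real.isLittleO_log_id_atTop.add (hcomp.trans_isBigO h2x)

private lemma gb_aux_real_ineq (K : ℕ) :
    ∀ᶠ x : ℝ in atTop, x * (2*x) ^ (Real.sqrt (2*x) + K) * 4 ^ (2*x/3) ≤ 4 ^ x := by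
  have htend := (gb_aux_isLittleO K).tendsto_div_nhds_zero
  have hev : ∀ᶠ x : ℝ in atTop,
      (Real.log x + (Real.sqrt (2*x) + K) * Real.log (2*x)) / x ≤ 1/3 :=
    htend.eventually_le_const (by norm_num)
  filter_upwards [hev, eventually_ge_atTop (1:ℝ)] with x hx hx1
  have hx0 : (0:ℝ) < x := by linarith
  have h2x0 : (0:ℝ) < 2*x := by linarith
  have hlog : Real.log x + (Real.sqrt (2*x) + K) * Real.log (2*x) ≤ x/3 := by
    rw [div_le_iff₀ hx0] at hx
    calc _ ≤ 1/3 * x := hx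
    _ = x/3 := by ring
  have hL : (0:ℝ) < x * (2*x) ^ (Real.sqrt (2*x) + K) * 4 ^ (2*x/3) := by positivity
  rw [← Real.exp_log hL, ← Real.exp_log (Real.rpow_pos_of_pos (by norm_num : (0:ℝ) < 4) x)]
  apply Real.exp_le_exp.mpr
  rw [Real.log_mul (by positivity) (by positivity), Real.log_mul hx0.ne' (by positivity),
    Real.log_rpow h2x0, Real.log_rpow (by norm_num : (0:ℝ) < 4),
    Real.log_rpow (by norm_num : (0:ℝ) < 4)]
  have hlog4 : (1:ℝ) ≤ Real.log 4 := by
    rw [show (4:ℝ) = 2^2 by norm_num, Real.log_pow]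
    have := Real.log_two_gt_d9
    push_cast
    linarith
  nlinarith [hlog, hx0.le]

private lemma gb_aux_nat_ineq (K : ℕ) : ∃ N : ℕ, ∀ n : ℕ, N ≤ n →
    n * (2*n) ^ (Nat.sqrt (2*n) + K) * 4 ^ (2*n/3) ≤ 4 ^ n := by
  obtain ⟨C, hC⟩ := (gb_aux_real_ineq K).exists_forall_of_atTop
  refine ⟨max 1 ⌈C⌉₊, fun n hn => ?_⟩
  have hn1 : 1 ≤ n := le_trans (le_max_left _ _) hn
  have hxC : C ≤ (n : ℝ) := by
    calc C ≤ (⌈C⌉₊ : ℝ) := Nat.le_ceil C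
    _ ≤ n := by exact_mod_cast le_trans (le_max_right _ _) hn
  have := hC n hxC
  rw [← @Nat.cast_le ℝ]
  simp only [Nat.cast_mul, Nat.cast_pow, Nat.cast_ofNat, ← Real.rpow_natCast]
  refine le_trans ?_ this
  gcongr
  · have : (1:ℕ) ≤ 2 * n := by omega
    exact_mod_cast this
  · push_cast
    gcongr
    calc ((2*n).sqrt : ℝ) ≤ Real.sqrt ((2*n : ℕ) : ℝ) := Real.nat_sqrt_le_real_sqrt
    _ = Real.sqrt (2 * (n:ℝ)) := by push_cast; ring_nf
  · norm_num
  · exact_mod_cast Nat.cast_div_le.trans (by norm_cast)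

private lemma gb_aux_centralBinom_le (K n : ℕ) (n_large : 2 < n)
    (hcard : ((Finset.Ioc n (2*n)).filter Nat.Prime).card ≤ K) :
    Nat.centralBinom n ≤ ((2*n) ^ Nat.sqrt (2*n) * 4 ^ (2*n/3)) * (2*n) ^ K := by
  have n_pos : 0 < n := by omega
  have n2_pos : 1 ≤ 2 * n := by omega
  set f : ℕ → ℕ := fun x => x ^ (Nat.centralBinom n).factorization x with hf
  have key : Nat.centralBinom n
      = (∏ x ∈ Finset.range (2*n/3 + 1), f x) * ∏ x ∈ Finset.Ico (2*n/3 + 1) (2*n + 1), f x := by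
    rw [← prod_pow_factorization_centralBinom n, Finset.range_eq_Ico,
      ← Finset.prod_Ico_consecutive _ (Nat.zero_le (2*n/3+1)) (by omega : 2*n/3+1 ≤ 2*n+1), ← Finset.range_eq_Ico]
  rw [key]
  apply Nat.mul_le_mul
  · -- primes up to `2n/3`, exactly as in mathlib's Bertrand proof
    let S := (Finset.range (2 * n / 3 + 1)).filter Nat.Prime
    have hSf : ∏ x ∈ S, f x = ∏ x ∈ Finset.range (2 * n / 3 + 1), f x := by
      refine Finset.prod_filter_of_ne fun p _ h => ?_
      contrapose! h; dsimp only [f]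
      rw [Nat.factorization_eq_zero_of_not_prime n.centralBinom h, _root_.pow_zero]
    rw [← hSf, ← Finset.prod_filter_mul_prod_filter_not S (· ≤ Nat.sqrt (2 * n))]
    apply Nat.mul_le_mul
    · refine (Finset.prod_le_prod' fun p _ => (?_ : f p ≤ 2 * n)).trans ?_
      · exact Nat.pow_factorization_choose_le (by omega)
      have hc : (Finset.Icc 1 (Nat.sqrt (2 * n))).card = Nat.sqrt (2 * n) := by
        rw [Nat.card_Icc, Nat.add_sub_cancel]
      rw [Finset.prod_const]
      refine pow_right_mono₀ n2_pos ((Finset.card_le_card fun x hx => ?_).trans hc.le)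
      obtain ⟨h1, h2⟩ := Finset.mem_filter.1 hx
      exact Finset.mem_Icc.mpr ⟨(Finset.mem_filter.1 h1).2.one_lt.le, h2⟩
    · refine le_trans ?_ (primorial_le_4_pow (2 * n / 3))
      refine (Finset.prod_le_prod' fun p hp => (?_ : f p ≤ p)).trans ?_
      · obtain ⟨h1, h2⟩ := Finset.mem_filter.1 hp
        refine (pow_right_mono₀ (Finset.mem_filter.1 h1).2.one_lt.le ?_).trans (pow_one p).le
        exact Nat.factorization_choose_le_one (Nat.sqrt_lt'.mp <| not_le.1 h2)
      refine Finset.prod_le_prod_of_subset_of_one_le' (Finset.filter_subset _ _) ?_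
      exact fun p hp _ => (Finset.mem_filter.1 hp).2.one_lt.le
  · -- primes in `(n, 2n]`: at most `K` of them, each contributing at most `2n`
    set T := (Finset.Ico (2*n/3 + 1) (2*n + 1)).filter (fun x => Nat.Prime x ∧ n < x) with hT
    have hTf : ∏ x ∈ T, f x = ∏ x ∈ Finset.Ico (2*n/3 + 1) (2*n + 1), f x := by
      refine Finset.prod_filter_of_ne fun p hp h => ?_
      rw [Finset.mem_Ico] at hp
      by_contra hnot
      rw [not_and_or] at hnot
      apply h
      rcases hnot with hnp | hle
      · dsimp only [f]
        rw [Nat.factorization_eq_zero_of_not_prime n.centralBinom hnp, _root_.pow_zero]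
      · push_neg at hle
        have h3p : 2 * n < 3 * p := by
          have := hp.1
          have h2 : 2 * n / 3 < p := by omega
          have := (Nat.div_lt_iff_lt_mul (by norm_num : 0 < 3)).mp h2
          omega
        dsimp only [f]
        rw [Nat.factorization_centralBinom_of_two_mul_self_lt_three_mul n_large hle h3p,
          _root_.pow_zero]
    rw [← hTf]
    calc ∏ x ∈ T, f x ≤ ∏ _x ∈ T, 2 * n := by
          refine Finset.prod_le_prod' fun p _ => ?_
          exact Nat.pow_factorization_choose_le (by omega)
      _ = (2*n) ^ T.card := Finset.prod_const _
      _ ≤ (2*n) ^ K := by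
          refine Nat.pow_le_pow_right (by omega) (le_trans (Finset.card_le_card ?_) hcard)
          intro x hx
          rw [hT, Finset.mem_filter, Finset.mem_Ico] at hx
          rw [Finset.mem_filter, Finset.mem_Ioc]
          exact ⟨⟨hx.2.2, by omega⟩, hx.2.1⟩

/-- For every `K` there are eventually more than `K` primes in `(n, 2n]`. -/
private lemma gb_aux_many_primes (K : ℕ) : ∃ N : ℕ, ∀ n : ℕ, N ≤ n →
    K < ((Finset.Ioc n (2*n)).filter Nat.Prime).card := by
  obtain ⟨N₀, hN₀⟩ := gb_aux_nat_ineq K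
  refine ⟨max N₀ 512, fun n hn => ?_⟩
  have hn0 : N₀ ≤ n := le_trans (le_max_left _ _) hn
  have hn512 : 512 ≤ n := le_trans (le_max_right _ _) hn
  by_contra hle
  push_neg at hle
  have H2 : 4 ^ n < n * n.centralBinom :=
    Nat.four_pow_lt_mul_centralBinom n (by omega)
  have H3 : n.centralBinom ≤ ((2*n) ^ Nat.sqrt (2*n) * 4 ^ (2*n/3)) * (2*n) ^ K :=
    gb_aux_centralBinom_le K n (by omega) hle
  have H1 := hN₀ n hn0
  rw [pow_add] at H1
  have : n * n.centralBinom ≤ 4 ^ n := by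
    calc n * n.centralBinom ≤ n * (((2*n) ^ Nat.sqrt (2*n) * 4 ^ (2*n/3)) * (2*n) ^ K) :=
          Nat.mul_le_mul_left n H3
    _ = n * ((2*n) ^ Nat.sqrt (2*n) * (2*n) ^ K) * 4 ^ (2*n/3) := by ring
    _ ≤ 4 ^ n := H1
  omega

/-- Auxiliary prime-version of the generalized Bertrand theorem: for every
positive integer `k` there is a constant `N` such that every prime `p > N`
admits a prime `q` with `(p + 2k - 1)/2 < q < p`, i.e.
`p + 2*k - 1 < 2*q` and `q < p`. -/
theorem generalized_bertrand_aux :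
    ∀ k : ℕ, 0 < k → ∃ N : ℕ, ∀ p : ℕ, p.Prime → N < p →
      ∃ q : ℕ, q.Prime ∧ p + 2 * k - 1 < 2 * q ∧ q < p := by
  intro k hk
  obtain ⟨N₀, hN₀⟩ := gb_aux_many_primes (2 * k)
  refine ⟨2 * N₀ + 4 * k + 4, fun p hp hpN => ?_⟩
  have hodd : p % 2 = 1 := by
    rcases hp.eq_two_or_odd with h2 | h1
    · omega
    · exact h1
  set n : ℕ := (p + 2 * k - 1) / 2 with hn
  have h2n : 2 * n = p + 2 * k - 1 := by omega
  have hnN₀ : N₀ ≤ n := by omega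
  have hcard := hN₀ n hnN₀
  -- split `(n, 2n]` at `2n - 2k`
  have hsplit : (Finset.Ioc n (2*n)).filter Nat.Prime ⊆
      ((Finset.Ioc n (2*n - 2*k)).filter Nat.Prime) ∪
        ((Finset.Ioc (2*n - 2*k) (2*n)).filter Nat.Prime) := by
    intro x hx
    rw [Finset.mem_filter, Finset.mem_Ioc] at hx
    rw [Finset.mem_union, Finset.mem_filter, Finset.mem_filter, Finset.mem_Ioc, Finset.mem_Ioc]
    by_cases hxle : x ≤ 2*n - 2*k
    · exact Or.inl ⟨⟨hx.1.1, hxle⟩, hx.2⟩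
    · exact Or.inr ⟨⟨by omega, hx.1.2⟩, hx.2⟩
  have hright : ((Finset.Ioc (2*n - 2*k) (2*n)).filter Nat.Prime).card ≤ 2 * k := by
    calc ((Finset.Ioc (2*n - 2*k) (2*n)).filter Nat.Prime).card
        ≤ (Finset.Ioc (2*n - 2*k) (2*n)).card := Finset.card_le_card (Finset.filter_subset _ _)
      _ ≤ 2 * k := by rw [Nat.card_Ioc]; omega
  have hleft : 0 < ((Finset.Ioc n (2*n - 2*k)).filter Nat.Prime).card := by
    have := Finset.card_le_card hsplit
    have hu := Finset.card_union_le ((Finset.Ioc n (2*n - 2*k)).filter Nat.Prime)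
      ((Finset.Ioc (2*n - 2*k) (2*n)).filter Nat.Prime)
    omega
  obtain ⟨q, hq⟩ := Finset.card_pos.mp hleft
  rw [Finset.mem_filter, Finset.mem_Ioc] at hq
  exact ⟨q, hq.2, by omega, by omega⟩
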